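/- Let Φ be an invertible N×N complex matrix whose induced Euclidean operator norm satisfies ‖Φ x‖₂ ≤ ‖x‖₂ for every vector x, let Λ be the diagonal matrix with diagonal entries λ_1, …, λ_N ∈ ℂ satisfying |λ_k| ≤ 1 for all k, and set A = Φ Λ Φ⁻¹. Let ε_m ≥ 0 and let e, ρ : ℕ → (Fin N → ℂ) satisfy e^{n+1} = A e^n + ρ^n for all n, with ‖ρ^n‖₂ ≤ ε_m for all n ≥ m. Then for every n ≥ m, ‖e^n‖₂ ≤ ‖Φ⁻¹‖_F · ( ‖e^m‖₂ + (n − m)·ε_m ), where ‖·‖_F denotes the Frobenius norm. -/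

import Mathlib

/-- The Euclidean (ℓ²) norm on `Fin N → ℂ`. -/
noncomputable def l2norm {N : ℕ} (v : Fin N → ℂ) : ℝ :=
  ‖(WithLp.equiv 2 (Fin N → ℂ)).symm v‖

/-- The Frobenius norm of a square complex matrix. -/
noncomputable def frobeniusNorm {N : ℕ} (M : Matrix (Fin N) (Fin N) ℂ) : ℝ :=
  Real.sqrt (∑ i, ∑ j, ‖M i j‖ ^ 2)

lemma l2norm_eq {N : ℕ} (v : Fin N → ℂ) : l2norm v = Real.sqrt (∑ i, ‖v i‖ ^ 2) := by
  rw [l2norm, EuclideanSpace.norm_eq]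
  simp [WithLp.equiv_symm_apply, PiLp.toLp_apply]

lemma l2norm_nonneg {N : ℕ} (v : Fin N → ℂ) : 0 ≤ l2norm v := norm_nonneg _

lemma l2norm_add_le {N : ℕ} (u v : Fin N → ℂ) : l2norm (u + v) ≤ l2norm u + l2norm v := by
  simpa [l2norm] using norm_add_le ((WithLp.equiv 2 (Fin N → ℂ)).symm u)
    ((WithLp.equiv 2 (Fin N → ℂ)).symm v)

lemma mulVec_le_frobenius {N : ℕ} (M : Matrix (Fin N) (Fin N) ℂ) (x : Fin N → ℂ) :
    l2norm (M.mulVec x) ≤ frobeniusNorm M * l2norm x := by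
  have key : ∀ i, ‖M.mulVec x i‖ ^ 2 ≤ (∑ j, ‖M i j‖ ^ 2) * (∑ j, ‖x j‖ ^ 2) := by
    intro i
    have h1 : ‖M.mulVec x i‖ ≤ ∑ j, ‖M i j‖ * ‖x j‖ := by
      calc ‖M.mulVec x i‖ = ‖∑ j, M i j * x j‖ := by rfl
        _ ≤ ∑ j, ‖M i j * x j‖ := norm_sum_le _ _
        _ = ∑ j, ‖M i j‖ * ‖x j‖ := by simp [norm_mul]
    calc ‖M.mulVec x i‖ ^ 2 ≤ (∑ j, ‖M i j‖ * ‖x j‖) ^ 2 := by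
          apply pow_le_pow_left₀ (norm_nonneg _) h1
      _ ≤ (∑ j, ‖M i j‖ ^ 2) * (∑ j, ‖x j‖ ^ 2) :=
          Finset.sum_mul_sq_le_sq_mul_sq _ _ _
  rw [l2norm_eq, l2norm_eq, frobeniusNorm, ← Real.sqrt_mul (by positivity)]
  apply Real.sqrt_le_sqrt
  calc ∑ i, ‖M.mulVec x i‖ ^ 2 ≤ ∑ i, (∑ j, ‖M i j‖ ^ 2) * (∑ j, ‖x j‖ ^ 2) :=
        Finset.sum_le_sum (fun i _ => key i)
    _ = (∑ i, ∑ j, ‖M i j‖ ^ 2) * (∑ j, ‖x j‖ ^ 2) := by rw [Finset.sum_mul]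

lemma diag_mulVec_le {N : ℕ} (lam : Fin N → ℂ) (hlam : ∀ k, ‖lam k‖ ≤ 1)
    (v : Fin N → ℂ) : l2norm ((Matrix.diagonal lam).mulVec v) ≤ l2norm v := by
  rw [l2norm_eq, l2norm_eq]
  apply Real.sqrt_le_sqrt
  apply Finset.sum_le_sum
  intro i _
  rw [Matrix.mulVec_diagonal]
  have : ‖lam i * v i‖ = ‖lam i‖ * ‖v i‖ := by
    rw [norm_mul]
  calc ‖lam i * v i‖ ^ 2 = (‖lam i‖ * ‖v i‖) ^ 2 := by rw [this]
    _ ≤ (1 * ‖v i‖) ^ 2 := by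
        apply pow_le_pow_left₀ (by positivity)
        exact mul_le_mul_of_nonneg_right (hlam i) (norm_nonneg _)
    _ = ‖v i‖ ^ 2 := by ring


/-- The error bound for the DMD reduced-order model (Lu & Tartakovsky 2019):
if the DMD modes `Φ` have Euclidean operator norm at most 1, the DMD eigenvalues
have modulus at most 1, and the error sequence evolves by `A = Φ Λ Φ⁻¹` up to
one-step residuals of size at most `ε_m`, then for `n ≥ m`,
`‖e^n‖₂ ≤ ‖Φ⁻¹‖_F (‖e^m‖₂ + (n − m) ε_m)`. -/
theorem dmd_error_bound_frobenius {N : ℕ} (Φ : Matrix (Fin N) (Fin N) ℂ)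
    (hΦ : IsUnit Φ)
    (hΦnorm : ∀ x : Fin N → ℂ, l2norm (Φ.mulVec x) ≤ l2norm x)
    (lam : Fin N → ℂ) (hlam : ∀ k, ‖lam k‖ ≤ 1)
    (A : Matrix (Fin N) (Fin N) ℂ)
    (hA : A = Φ * Matrix.diagonal lam * Φ⁻¹)
    (εm : ℝ) (hεm : 0 ≤ εm) (m : ℕ)
    (e ρ : ℕ → (Fin N → ℂ))
    (hrec : ∀ n, e (n + 1) = A.mulVec (e n) + ρ n)
    (hρ : ∀ n, m ≤ n → l2norm (ρ n) ≤ εm) :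
    ∀ n, m ≤ n →
      l2norm (e n) ≤ frobeniusNorm Φ⁻¹ * (l2norm (e m) + (n - m : ℕ) * εm) := by
  have hdet : IsUnit Φ.det := (Matrix.isUnit_iff_isUnit_det Φ).mp hΦ
  have hinv : Φ⁻¹ * Φ = 1 := Matrix.nonsing_inv_mul Φ hdet
  have hinv' : Φ * Φ⁻¹ = 1 := Matrix.mul_nonsing_inv Φ hdet
  set F := frobeniusNorm Φ⁻¹ with hF
  have hF0 : 0 ≤ F := Real.sqrt_nonneg _
  -- the transformed sequence
  set f : ℕ → (Fin N → ℂ) := fun n => Φ⁻¹.mulVec (e n) with hf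
  have hstep : ∀ n, f (n + 1) = (Matrix.diagonal lam).mulVec (f n) + Φ⁻¹.mulVec (ρ n) := by
    intro n
    have : Φ⁻¹ * A = Matrix.diagonal lam * Φ⁻¹ := by
      rw [hA, ← Matrix.mul_assoc, ← Matrix.mul_assoc, hinv, Matrix.one_mul]
    simp only [hf, hrec n, Matrix.mulVec_add]
    rw [Matrix.mulVec_mulVec, this, ← Matrix.mulVec_mulVec]
  -- bound on f by induction
  have hfb : ∀ n, m ≤ n → l2norm (f n) ≤ l2norm (f m) + (n - m : ℕ) * (F * εm) := by
    intro n hn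
    induction n, hn using Nat.le_induction with
    | base => simp
    | succ n hn ih =>
      have h1 : l2norm (f (n + 1)) ≤ l2norm (f n) + F * εm := by
        rw [hstep n]
        calc l2norm ((Matrix.diagonal lam).mulVec (f n) + Φ⁻¹.mulVec (ρ n))
            ≤ l2norm ((Matrix.diagonal lam).mulVec (f n)) + l2norm (Φ⁻¹.mulVec (ρ n)) :=
              l2norm_add_le _ _
          _ ≤ l2norm (f n) + F * εm := by
              gcongr
              · exact diag_mulVec_le lam hlam _
              · calc l2norm (Φ⁻¹.mulVec (ρ n)) ≤ F * l2norm (ρ n) := mulVec_le_frobenius _ _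
                  _ ≤ F * εm := by gcongr; exact hρ n hn
      have hcast : ((n + 1 - m : ℕ) : ℝ) = (n - m : ℕ) + 1 := by
        rw [Nat.sub_add_comm hn]; push_cast; ring
      calc l2norm (f (n + 1)) ≤ l2norm (f n) + F * εm := h1
        _ ≤ (l2norm (f m) + (n - m : ℕ) * (F * εm)) + F * εm := by gcongr
        _ = l2norm (f m) + ((n - m : ℕ) + 1) * (F * εm) := by ring
        _ = l2norm (f m) + (n + 1 - m : ℕ) * (F * εm) := by rw [hcast]
  intro n hn
  have hefn : e n = Φ.mulVec (f n) := by
    simp only [hf, Matrix.mulVec_mulVec, hinv', Matrix.one_mulVec]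
  calc l2norm (e n) = l2norm (Φ.mulVec (f n)) := by rw [hefn]
    _ ≤ l2norm (f n) := hΦnorm _
    _ ≤ l2norm (f m) + (n - m : ℕ) * (F * εm) := hfb n hn
    _ ≤ F * l2norm (e m) + (n - m : ℕ) * (F * εm) := by
        gcongr
        exact mulVec_le_frobenius _ _
    _ = F * (l2norm (e m) + (n - m : ℕ) * εm) := by ring
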